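/- Let f : ℝ → ℝ be continuous and weakly increasing. Then the set A := {x ∈ ℝ : λ⁻f(x) < Λ⁺f(x)} has Lebesgue measure zero, where λ⁻f(x) := liminf_{h→0⁺} (f(x) − f(x−h))/h and Λ⁺f(x) := limsup_{h→0⁺} (f(x+h) − f(x))/h, both in the extended reals. -/

import Mathlib

open Filter MeasureTheory

/-- Upper right Dini derivative, in the extended reals. -/
noncomputable def upperRightDini (f : ℝ → ℝ) (x : ℝ) : EReal :=
  limsup (fun h => (((f (x + h) - f x) / h : ℝ) : EReal)) (nhdsWithin 0 (Set.Ioi 0))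

/-- Lower left Dini derivative, in the extended reals. -/
noncomputable def lowerLeftDini (f : ℝ → ℝ) (x : ℝ) : EReal :=
  liminf (fun h => (((f x - f (x - h)) / h : ℝ) : EReal)) (nhdsWithin 0 (Set.Ioi 0))

lemma dini_eq_of_differentiable (f : ℝ → ℝ) (x : ℝ) (hd : DifferentiableAt ℝ f x) :
    lowerLeftDini f x = upperRightDini f x := by
  set c := deriv f x with hc
  have hslope : Tendsto (slope f x) (nhdsWithin x {x}ᶜ) (nhds c) :=
    hasDerivAt_iff_tendsto_slope.1 hd.hasDerivAt
  have hR : Tendsto (fun h : ℝ => (f (x + h) - f x) / h) (nhdsWithin 0 (Set.Ioi 0)) (nhds c) := by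
    have hmap : Tendsto (fun h : ℝ => x + h) (nhdsWithin 0 (Set.Ioi 0)) (nhdsWithin x {x}ᶜ) := by
      apply tendsto_nhdsWithin_of_tendsto_nhds_of_eventually_within
      · have : Tendsto (fun h : ℝ => x + h) (nhds 0) (nhds (x + 0)) :=
          (continuous_const.add continuous_id).tendsto 0
        simpa using this.mono_left nhdsWithin_le_nhds
      · filter_upwards [self_mem_nhdsWithin] with h hh
        simp [ne_of_gt (Set.mem_Ioi.mp hh)]
    have := hslope.comp hmap
    have heq : (fun h : ℝ => slope f x (x + h)) = fun h : ℝ => (f (x + h) - f x) / h := by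
      funext h
      simp [slope_def_field]
    simpa only [Function.comp_def, heq] using this
  have hL : Tendsto (fun h : ℝ => (f x - f (x - h)) / h) (nhdsWithin 0 (Set.Ioi 0)) (nhds c) := by
    have hmap : Tendsto (fun h : ℝ => x - h) (nhdsWithin 0 (Set.Ioi 0)) (nhdsWithin x {x}ᶜ) := by
      apply tendsto_nhdsWithin_of_tendsto_nhds_of_eventually_within
      · have : Tendsto (fun h : ℝ => x - h) (nhds 0) (nhds (x - 0)) :=
          (continuous_const.sub continuous_id).tendsto 0
        simpa using this.mono_left nhdsWithin_le_nhds
      · filter_upwards [self_mem_nhdsWithin] with h hh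
        simp [sub_eq_self, ne_of_gt (Set.mem_Ioi.mp hh)]
    have := hslope.comp hmap
    have heq : (fun h : ℝ => slope f x (x - h)) = fun h : ℝ => (f x - f (x - h)) / h := by
      funext h
      rw [slope_def_field]
      have : x - h - x = -h := by ring
      rw [this, div_neg, ← neg_div, neg_sub]
    simpa only [Function.comp_def, heq] using this
  have hRE : Tendsto (fun h : ℝ => (((f (x + h) - f x) / h : ℝ) : EReal))
      (nhdsWithin 0 (Set.Ioi 0)) (nhds (c : EReal)) := EReal.tendsto_coe.2 hR
  have hLE : Tendsto (fun h : ℝ => (((f x - f (x - h)) / h : ℝ) : EReal))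
      (nhdsWithin 0 (Set.Ioi 0)) (nhds (c : EReal)) := EReal.tendsto_coe.2 hL
  rw [lowerLeftDini, upperRightDini, hLE.liminf_eq, hRE.limsup_eq]

theorem dini_mismatch_null (f : ℝ → ℝ) (hcont : Continuous f) (hmono : Monotone f) :
    volume {x : ℝ | lowerLeftDini f x < upperRightDini f x} = 0 := by
  have hdiff : ∀ᵐ x : ℝ, DifferentiableAt ℝ f x := hmono.ae_differentiableAt
  rw [ae_iff] at hdiff
  apply measure_mono_null _ hdiff
  intro x hx
  simp only [Set.mem_setOf_eq] at hx ⊢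
  intro hdx
  exact absurd (dini_eq_of_differentiable f x hdx) (ne_of_lt hx)
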